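/- Let A_1, …, A_M be real n×n matrices, set A := A_1 and D_j := A_j − A_1 (so D_1 = 0), and let B_1, …, B_M be real n×m matrices. Let P be a symmetric positive semidefinite n×n matrix satisfying A·P + P·Aᵀ + ∑_{j=1}^{M} (D_j·P·D_jᵀ + B_j·B_jᵀ) = 0, and assume that for every k ∈ {2,…,M} the matrix ∑_{j=1}^{M} D_j·P·D_jᵀ + ∑_{j≠k} B_j·B_jᵀ − (D_k·P + P·D_kᵀ) is positive semidefinite. Then for every k ∈ {1,…,M} the matrix −(A_k·P + P·A_kᵀ + B_k·B_kᵀ) is positive semidefinite. -/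
import Mathlib


open Matrix

lemma psd_sum' {n M : ℕ} (f : Fin M → Matrix (Fin n) (Fin n) ℝ)
    (h : ∀ j, (f j).PosSemidef) : (∑ j : Fin M, f j).PosSemidef := by
  classical
  refine Finset.sum_induction f _ (fun a b ha hb => ha.add hb) Matrix.PosSemidef.zero
    (fun j _ => h j)

lemma psd_erase_sum {n m M : ℕ} (B : Fin M → Matrix (Fin n) (Fin m) ℝ) (k : Fin M) :
    (∑ j ∈ Finset.univ.erase k, B j * (B j)ᵀ).PosSemidef := by
  classical
  refine Finset.sum_induction _ _ (fun a b ha hb => ha.add hb) Matrix.PosSemidef.zero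
    (fun j _ => ?_)
  simpa using Matrix.posSemidef_self_mul_conjTranspose (B j)

theorem lmi_gramians_of_generalized_lyapunov
    {n m M : ℕ} (hM : 0 < M)
    (A : Fin M → Matrix (Fin n) (Fin n) ℝ)
    (B : Fin M → Matrix (Fin n) (Fin m) ℝ)
    (D : Fin M → Matrix (Fin n) (Fin n) ℝ)
    (hD : ∀ j, D j = A j - A ⟨0, hM⟩)
    (P : Matrix (Fin n) (Fin n) ℝ) (hPpsd : P.PosSemidef)
    (hP : A ⟨0, hM⟩ * P + P * (A ⟨0, hM⟩)ᵀ +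
      ∑ j : Fin M, (D j * P * (D j)ᵀ + B j * (B j)ᵀ) = 0)
    (hLMI : ∀ k : Fin M, k ≠ ⟨0, hM⟩ →
      (∑ j : Fin M, D j * P * (D j)ᵀ +
        ∑ j ∈ Finset.univ.erase k, B j * (B j)ᵀ -
        (D k * P + P * (D k)ᵀ)).PosSemidef) :
    ∀ k : Fin M, (-(A k * P + P * (A k)ᵀ + B k * (B k)ᵀ)).PosSemidef := by
  classical
  intro k
  have hsum : (∑ j : Fin M, (D j * P * (D j)ᵀ + B j * (B j)ᵀ))
      = (∑ j : Fin M, D j * P * (D j)ᵀ) + ∑ j : Fin M, B j * (B j)ᵀ :=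
    Finset.sum_add_distrib
  have hA0 : A ⟨0,hM⟩ * P + P * (A ⟨0,hM⟩)ᵀ
      = -((∑ j : Fin M, D j * P * (D j)ᵀ) + ∑ j : Fin M, B j * (B j)ᵀ) := by
    rw [← hsum]
    exact eq_neg_of_add_eq_zero_left hP
  have herase : ∑ j ∈ Finset.univ.erase k, B j * (B j)ᵀ
      = (∑ j : Fin M, B j * (B j)ᵀ) - B k * (B k)ᵀ := by
    rw [eq_sub_iff_add_eq, Finset.sum_erase_add _ _ (Finset.mem_univ k)]
  have hA0' : A ⟨0,hM⟩ * P
      = -((∑ j : Fin M, D j * P * (D j)ᵀ) + ∑ j : Fin M, B j * (B j)ᵀ)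
        - P * (A ⟨0,hM⟩)ᵀ := eq_sub_of_add_eq hA0
  by_cases hk : k = ⟨0, hM⟩
  · rw [hk]
    have heq : -(A ⟨0,hM⟩ * P + P * (A ⟨0,hM⟩)ᵀ + B ⟨0,hM⟩ * (B ⟨0,hM⟩)ᵀ)
        = (∑ j : Fin M, D j * P * (D j)ᵀ) + ∑ j ∈ Finset.univ.erase (⟨0,hM⟩ : Fin M), B j * (B j)ᵀ := by
      rw [show ∑ j ∈ Finset.univ.erase (⟨0,hM⟩ : Fin M), B j * (B j)ᵀ
          = (∑ j : Fin M, B j * (B j)ᵀ) - B ⟨0,hM⟩ * (B ⟨0,hM⟩)ᵀ from by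
        rw [eq_sub_iff_add_eq, Finset.sum_erase_add _ _ (Finset.mem_univ _)], hA0']
      abel
    rw [heq]
    exact (psd_sum' _ (fun j => by
      simpa using hPpsd.mul_mul_conjTranspose_same (D j))).add (psd_erase_sum B _)
  · have h := hLMI k hk
    have hAk : A k = A ⟨0, hM⟩ + D k := by rw [hD k]; abel
    have heq : -(A k * P + P * (A k)ᵀ + B k * (B k)ᵀ)
        = ∑ j : Fin M, D j * P * (D j)ᵀ +
          ∑ j ∈ Finset.univ.erase k, B j * (B j)ᵀ -
          (D k * P + P * (D k)ᵀ) := by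
      rw [herase, hAk, Matrix.transpose_add, add_mul, mul_add, hA0']
      abel
    rw [heq]
    exact h
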